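/- Let Q, A, S_e, S_d, X, Y be finite random variables with joint law P_Q·P_{A|Q}·P_{S_e,S_d|A}·P_{X|A,S_e,Q}·P_{Y|X,S_e,S_d}. Then I(X; Y,S_d | A, Q) − I(X; S_e | A, Q) ≤ I(X; Y,S_d | A) − I(X; S_e | A), where the right-hand quantities are computed with respect to the marginal of (A,S_e,S_d,X,Y). -/

import Mathlib

open Finset
noncomputable section
namespace IT

variable {Ω : Type} [Fintype Ω]

/-- Marginal probability mass of the event `X = a` under the weight function `p`. -/
def marg {α : Type} [Fintype α] [DecidableEq α]
    (p : Ω → ℝ) (X : Ω → α) (a : α) : ℝ :=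
  ∑ ω, if X ω = a then p ω else 0

/-- Shannon entropy (natural logarithm) of the random variable `X`. -/
def ent {α : Type} [Fintype α] [DecidableEq α] (p : Ω → ℝ) (X : Ω → α) : ℝ :=
  ∑ a, Real.negMulLog (marg p X a)

/-- Conditional entropy `H(X | Y)`. -/
def condEnt {α β : Type} [Fintype α] [DecidableEq α] [Fintype β] [DecidableEq β]
    (p : Ω → ℝ) (X : Ω → α) (Y : Ω → β) : ℝ :=
  ent p (fun ω => (X ω, Y ω)) - ent p Y

/-- Mutual information `I(X; Y)`. -/
def mi {α β : Type} [Fintype α] [DecidableEq α] [Fintype β] [DecidableEq β]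
    (p : Ω → ℝ) (X : Ω → α) (Y : Ω → β) : ℝ :=
  ent p X + ent p Y - ent p (fun ω => (X ω, Y ω))

/-- Conditional mutual information `I(X; Y | Z)`. -/
def condMI {α β γ : Type} [Fintype α] [DecidableEq α] [Fintype β] [DecidableEq β]
    [Fintype γ] [DecidableEq γ]
    (p : Ω → ℝ) (X : Ω → α) (Y : Ω → β) (Z : Ω → γ) : ℝ :=
  condEnt p X Z + condEnt p Y Z - condEnt p (fun ω => (X ω, Y ω)) Z

/-- `X` and `Y` are conditionally independent given `Z`:
`P(X=a, Z=c) ⬝ P(Y=b, Z=c) = P(X=a, Y=b, Z=c) ⬝ P(Z=c)`. -/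
def CondIndep {α β γ : Type} [Fintype α] [DecidableEq α] [Fintype β] [DecidableEq β]
    [Fintype γ] [DecidableEq γ]
    (p : Ω → ℝ) (X : Ω → α) (Y : Ω → β) (Z : Ω → γ) : Prop :=
  ∀ a b c,
    marg p (fun ω => (X ω, Z ω)) (a, c) * marg p (fun ω => (Y ω, Z ω)) (b, c) =
    marg p (fun ω => (X ω, Y ω, Z ω)) (a, b, c) * marg p Z c

/-- `p` is a probability mass function on `Ω`. -/
def IsProb (p : Ω → ℝ) : Prop := (∀ ω, 0 ≤ p ω) ∧ ∑ ω, p ω = 1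

end IT

namespace IT

variable {Ω : Type} [Fintype Ω]
variable {α β γ : Type} [Fintype α] [DecidableEq α] [Fintype β] [DecidableEq β]
  [Fintype γ] [DecidableEq γ]

lemma marg_nonneg (p : Ω → ℝ) (hp : ∀ ω, 0 ≤ p ω) (X : Ω → α) (a : α) :
    0 ≤ marg p X a :=
  Finset.sum_nonneg fun ω _ => by split <;> simp [hp ω]

lemma marg_comp_equiv (p : Ω → ℝ) (X : Ω → α) (e : α ≃ β) (b : β) :
    marg p (fun ω => e (X ω)) b = marg p X (e.symm b) := by
  unfold marg
  refine Finset.sum_congr rfl fun ω _ => ?_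
  simp [Equiv.apply_eq_iff_eq_symm_apply]

lemma ent_comp_equiv (p : Ω → ℝ) (X : Ω → α) (e : α ≃ β) :
    ent p (fun ω => e (X ω)) = ent p X := by
  unfold ent
  rw [← Equiv.sum_comp e (fun b => Real.negMulLog (marg p (fun ω => e (X ω)) b))]
  refine Finset.sum_congr rfl fun a _ => ?_
  rw [marg_comp_equiv, Equiv.symm_apply_apply]

lemma ent_congr (p : Ω → ℝ) (X : Ω → α) (Y : Ω → β) (e : α ≃ β)
    (h : ∀ ω, Y ω = e (X ω)) : ent p Y = ent p X := by
  rw [show Y = fun ω => e (X ω) from funext h, ent_comp_equiv]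

lemma marg_pair_le (p : Ω → ℝ) (hp : ∀ ω, 0 ≤ p ω) (X : Ω → α) (Y : Ω → β) (a : α) (b : β) :
    marg p (fun ω => (X ω, Y ω)) (a, b) ≤ marg p Y b := by
  refine Finset.sum_le_sum fun ω _ => ?_
  dsimp only
  by_cases hb : Y ω = b
  · split_ifs <;> simp [hp ω]
  · have h1 : ¬ (X ω, Y ω) = (a, b) := by simp [hb]
    simp [h1, hb]

lemma marg_sum_fst (p : Ω → ℝ) (X : Ω → α) (Y : Ω → β) (b : β) :
    ∑ a, marg p (fun ω => (X ω, Y ω)) (a, b) = marg p Y b := by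
  unfold marg
  rw [Finset.sum_comm]
  refine Finset.sum_congr rfl fun ω _ => ?_
  by_cases hb : Y ω = b
  · simp [hb, Prod.mk.injEq]
  · simp [hb, Prod.mk.injEq]

lemma marg_sum_mid (p : Ω → ℝ) (U : Ω → α) (Q : Ω → β) (Z : Ω → γ) (u : α) (z : γ) :
    ∑ q, marg p (fun ω => (U ω, Q ω, Z ω)) (u, q, z) = marg p (fun ω => (U ω, Z ω)) (u, z) := by
  unfold marg
  rw [Finset.sum_comm]
  refine Finset.sum_congr rfl fun ω _ => ?_
  by_cases h : U ω = u ∧ Z ω = z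
  · simp [h.1, h.2, Prod.mk.injEq]
  · rw [not_and_or] at h
    rcases h with h | h <;> simp [h, Prod.mk.injEq]

lemma marg_mid_le (p : Ω → ℝ) (hp : ∀ ω, 0 ≤ p ω) (U : Ω → α) (Q : Ω → β) (Z : Ω → γ)
    (u : α) (q : β) (z : γ) :
    marg p (fun ω => (U ω, Q ω, Z ω)) (u, q, z) ≤ marg p (fun ω => (U ω, Z ω)) (u, z) := by
  refine Finset.sum_le_sum fun ω _ => ?_
  dsimp only
  by_cases h : (U ω, Z ω) = (u, z)
  · split_ifs <;> simp [hp ω]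
  · have h1 : ¬ (U ω, Q ω, Z ω) = (u, q, z) := by
      simp only [Prod.mk.injEq] at h ⊢
      tauto
    simp [h1, h]

lemma core_diff (p : Ω → ℝ) (U : Ω → α) (Q : Ω → β) (Z : Ω → γ) :
    ent p (fun ω => (U ω, Q ω, Z ω)) + ent p Z
      - ent p (fun ω => (U ω, Z ω)) - ent p (fun ω => (Q ω, Z ω))
    = ∑ u, ∑ q, ∑ z,
        marg p (fun ω => (U ω, Q ω, Z ω)) (u, q, z) *
          (Real.log (marg p (fun ω => (U ω, Z ω)) (u, z))
            + Real.log (marg p (fun ω => (Q ω, Z ω)) (q, z))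
            - Real.log (marg p (fun ω => (U ω, Q ω, Z ω)) (u, q, z))
            - Real.log (marg p Z z)) := by
  have hA : ent p (fun ω => (U ω, Q ω, Z ω))
      = ∑ u, ∑ q, ∑ z, Real.negMulLog (marg p (fun ω => (U ω, Q ω, Z ω)) (u, q, z)) := by
    simp [ent, Fintype.sum_prod_type]
  have hB : ent p (fun ω => (U ω, Z ω))
      = ∑ u, ∑ q, ∑ z, -(marg p (fun ω => (U ω, Q ω, Z ω)) (u, q, z)
          * Real.log (marg p (fun ω => (U ω, Z ω)) (u, z))) := by
    simp only [ent, Fintype.sum_prod_type]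
    refine Finset.sum_congr rfl fun u _ => ?_
    rw [Finset.sum_comm]
    refine Finset.sum_congr rfl fun z _ => ?_
    simp only [neg_mul_eq_neg_mul]
    rw [← Finset.sum_mul, Finset.sum_neg_distrib, marg_sum_mid]
    simp [Real.negMulLog_eq_neg]
  have hC : ent p (fun ω => (Q ω, Z ω))
      = ∑ u, ∑ q, ∑ z, -(marg p (fun ω => (U ω, Q ω, Z ω)) (u, q, z)
          * Real.log (marg p (fun ω => (Q ω, Z ω)) (q, z))) := by
    have inner : ∀ q z, Real.negMulLog (marg p (fun ω => (Q ω, Z ω)) (q, z))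
        = ∑ u, -(marg p (fun ω => (U ω, Q ω, Z ω)) (u, q, z)
            * Real.log (marg p (fun ω => (Q ω, Z ω)) (q, z))) := by
      intro q z
      simp only [neg_mul_eq_neg_mul]
      rw [← Finset.sum_mul, Finset.sum_neg_distrib,
        marg_sum_fst p U (fun ω => (Q ω, Z ω)) (q, z)]
      simp [Real.negMulLog_eq_neg]
    calc ent p (fun ω => (Q ω, Z ω))
        = ∑ q, ∑ z, Real.negMulLog (marg p (fun ω => (Q ω, Z ω)) (q, z)) := by
          simp only [ent, Fintype.sum_prod_type]
      _ = ∑ q, ∑ z, ∑ u, -(marg p (fun ω => (U ω, Q ω, Z ω)) (u, q, z)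
            * Real.log (marg p (fun ω => (Q ω, Z ω)) (q, z))) :=
          Finset.sum_congr rfl fun q _ => Finset.sum_congr rfl fun z _ => inner q z
      _ = ∑ q, ∑ u, ∑ z, -(marg p (fun ω => (U ω, Q ω, Z ω)) (u, q, z)
            * Real.log (marg p (fun ω => (Q ω, Z ω)) (q, z))) :=
          Finset.sum_congr rfl fun q _ => Finset.sum_comm
      _ = ∑ u, ∑ q, ∑ z, -(marg p (fun ω => (U ω, Q ω, Z ω)) (u, q, z)
            * Real.log (marg p (fun ω => (Q ω, Z ω)) (q, z))) := Finset.sum_comm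
  have hD : ent p Z
      = ∑ u, ∑ q, ∑ z, -(marg p (fun ω => (U ω, Q ω, Z ω)) (u, q, z)
          * Real.log (marg p Z z)) := by
    have inner : ∀ z, Real.negMulLog (marg p Z z)
        = ∑ q, ∑ u, -(marg p (fun ω => (U ω, Q ω, Z ω)) (u, q, z)
            * Real.log (marg p Z z)) := by
      intro z
      have h1 : ∀ q : β, ∑ u, -(marg p (fun ω => (U ω, Q ω, Z ω)) (u, q, z)
          * Real.log (marg p Z z))
          = -(marg p (fun ω => (Q ω, Z ω)) (q, z) * Real.log (marg p Z z)) := by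
        intro q
        simp only [neg_mul_eq_neg_mul]
        rw [← Finset.sum_mul, Finset.sum_neg_distrib,
          marg_sum_fst p U (fun ω => (Q ω, Z ω)) (q, z)]
      rw [Finset.sum_congr rfl fun q _ => h1 q]
      simp only [neg_mul_eq_neg_mul]
      rw [← Finset.sum_mul, Finset.sum_neg_distrib, marg_sum_fst p Q Z z]
      simp [Real.negMulLog_eq_neg]
    calc ent p Z = ∑ z, Real.negMulLog (marg p Z z) := rfl
      _ = ∑ z, ∑ q, ∑ u, -(marg p (fun ω => (U ω, Q ω, Z ω)) (u, q, z)
            * Real.log (marg p Z z)) := Finset.sum_congr rfl fun z _ => inner z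
      _ = ∑ q, ∑ z, ∑ u, -(marg p (fun ω => (U ω, Q ω, Z ω)) (u, q, z)
            * Real.log (marg p Z z)) := Finset.sum_comm
      _ = ∑ q, ∑ u, ∑ z, -(marg p (fun ω => (U ω, Q ω, Z ω)) (u, q, z)
            * Real.log (marg p Z z)) :=
          Finset.sum_congr rfl fun q _ => Finset.sum_comm
      _ = ∑ u, ∑ q, ∑ z, -(marg p (fun ω => (U ω, Q ω, Z ω)) (u, q, z)
            * Real.log (marg p Z z)) := Finset.sum_comm
  rw [hA, hB, hC, hD]
  simp only [← Finset.sum_add_distrib, ← Finset.sum_sub_distrib]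
  refine Finset.sum_congr rfl fun u _ => Finset.sum_congr rfl fun q _ =>
    Finset.sum_congr rfl fun z _ => ?_
  simp only [Real.negMulLog_eq_neg]
  ring


lemma core_eq (p : Ω → ℝ) (hp : ∀ ω, 0 ≤ p ω) (U : Ω → α) (Q : Ω → β) (Z : Ω → γ)
    (h : CondIndep p U Q Z) :
    ent p (fun ω => (U ω, Q ω, Z ω)) + ent p Z
      = ent p (fun ω => (U ω, Z ω)) + ent p (fun ω => (Q ω, Z ω)) := by
  have key : ent p (fun ω => (U ω, Q ω, Z ω)) + ent p Z
      - ent p (fun ω => (U ω, Z ω)) - ent p (fun ω => (Q ω, Z ω)) = 0 := by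
    rw [core_diff]
    refine Finset.sum_eq_zero fun u _ => Finset.sum_eq_zero fun q _ =>
      Finset.sum_eq_zero fun z _ => ?_
    by_cases h0 : marg p (fun ω => (U ω, Q ω, Z ω)) (u, q, z) = 0
    · rw [h0]; ring
    · have h1 : 0 < marg p (fun ω => (U ω, Q ω, Z ω)) (u, q, z) :=
        lt_of_le_of_ne (marg_nonneg p hp _ _) (Ne.symm h0)
      have h2 : 0 < marg p (fun ω => (U ω, Z ω)) (u, z) :=
        lt_of_lt_of_le h1 (marg_mid_le p hp U Q Z u q z)
      have h3 : 0 < marg p (fun ω => (Q ω, Z ω)) (q, z) :=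
        lt_of_lt_of_le h1 (marg_pair_le p hp U (fun ω => (Q ω, Z ω)) u (q, z))
      have h4 : 0 < marg p Z z :=
        lt_of_lt_of_le h3 (marg_pair_le p hp Q Z q z)
      have hlog : Real.log (marg p (fun ω => (U ω, Z ω)) (u, z))
          + Real.log (marg p (fun ω => (Q ω, Z ω)) (q, z))
          = Real.log (marg p (fun ω => (U ω, Q ω, Z ω)) (u, q, z)) + Real.log (marg p Z z) := by
        rw [← Real.log_mul h2.ne' h3.ne', h u q z, Real.log_mul h1.ne' h4.ne']
      rw [show Real.log (marg p (fun ω => (U ω, Z ω)) (u, z))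
          + Real.log (marg p (fun ω => (Q ω, Z ω)) (q, z))
          - Real.log (marg p (fun ω => (U ω, Q ω, Z ω)) (u, q, z)) - Real.log (marg p Z z) = 0 by
        rw [sub_sub, hlog]; ring]
      ring
  linarith

lemma core_le (p : Ω → ℝ) (hp : ∀ ω, 0 ≤ p ω) (U : Ω → α) (Q : Ω → β) (Z : Ω → γ) :
    ent p (fun ω => (U ω, Q ω, Z ω)) + ent p Z
      ≤ ent p (fun ω => (U ω, Z ω)) + ent p (fun ω => (Q ω, Z ω)) := by
  have key : ent p (fun ω => (U ω, Q ω, Z ω)) + ent p Z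
      - ent p (fun ω => (U ω, Z ω)) - ent p (fun ω => (Q ω, Z ω)) ≤ 0 := by
    rw [core_diff]
    have bound : ∀ u q z,
        marg p (fun ω => (U ω, Q ω, Z ω)) (u, q, z) *
          (Real.log (marg p (fun ω => (U ω, Z ω)) (u, z))
            + Real.log (marg p (fun ω => (Q ω, Z ω)) (q, z))
            - Real.log (marg p (fun ω => (U ω, Q ω, Z ω)) (u, q, z))
            - Real.log (marg p Z z))
        ≤ marg p (fun ω => (U ω, Z ω)) (u, z) * marg p (fun ω => (Q ω, Z ω)) (q, z) / marg p Z z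
          - marg p (fun ω => (U ω, Q ω, Z ω)) (u, q, z) := by
      intro u q z
      by_cases h0 : marg p (fun ω => (U ω, Q ω, Z ω)) (u, q, z) = 0
      · rw [h0]
        simp only [zero_mul, sub_zero]
        exact div_nonneg (mul_nonneg (marg_nonneg p hp _ _) (marg_nonneg p hp _ _))
          (marg_nonneg p hp _ _)
      · have h1 : 0 < marg p (fun ω => (U ω, Q ω, Z ω)) (u, q, z) :=
          lt_of_le_of_ne (marg_nonneg p hp _ _) (Ne.symm h0)
        have h2 : 0 < marg p (fun ω => (U ω, Z ω)) (u, z) :=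
          lt_of_lt_of_le h1 (marg_mid_le p hp U Q Z u q z)
        have h3 : 0 < marg p (fun ω => (Q ω, Z ω)) (q, z) :=
          lt_of_lt_of_le h1 (marg_pair_le p hp U (fun ω => (Q ω, Z ω)) u (q, z))
        have h4 : 0 < marg p Z z :=
          lt_of_lt_of_le h3 (marg_pair_le p hp Q Z q z)
        set a := marg p (fun ω => (U ω, Q ω, Z ω)) (u, q, z)
        set b := marg p (fun ω => (U ω, Z ω)) (u, z)
        set c := marg p (fun ω => (Q ω, Z ω)) (q, z)
        set d := marg p Z z
        have hx : 0 < b * c / (a * d) := by positivity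
        have hlog : Real.log b + Real.log c - Real.log a - Real.log d
            = Real.log (b * c / (a * d)) := by
          rw [Real.log_div (by positivity) (by positivity), Real.log_mul h2.ne' h3.ne',
            Real.log_mul h1.ne' h4.ne']
          ring
        rw [hlog]
        calc a * Real.log (b * c / (a * d)) ≤ a * (b * c / (a * d) - 1) := by
              exact mul_le_mul_of_nonneg_left (Real.log_le_sub_one_of_pos hx) h1.le
          _ = b * c / d - a := by field_simp
    calc ∑ u, ∑ q, ∑ z,
        marg p (fun ω => (U ω, Q ω, Z ω)) (u, q, z) *
          (Real.log (marg p (fun ω => (U ω, Z ω)) (u, z))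
            + Real.log (marg p (fun ω => (Q ω, Z ω)) (q, z))
            - Real.log (marg p (fun ω => (U ω, Q ω, Z ω)) (u, q, z))
            - Real.log (marg p Z z))
        ≤ ∑ u, ∑ q, ∑ z,
          (marg p (fun ω => (U ω, Z ω)) (u, z) * marg p (fun ω => (Q ω, Z ω)) (q, z) / marg p Z z
            - marg p (fun ω => (U ω, Q ω, Z ω)) (u, q, z)) := by
          refine Finset.sum_le_sum fun u _ => Finset.sum_le_sum fun q _ =>
            Finset.sum_le_sum fun z _ => bound u q z
      _ = ∑ z, ∑ q, ∑ u,
          (marg p (fun ω => (U ω, Z ω)) (u, z) * marg p (fun ω => (Q ω, Z ω)) (q, z) / marg p Z z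
            - marg p (fun ω => (U ω, Q ω, Z ω)) (u, q, z)) := by
          calc (∑ u, ∑ q, ∑ z,
              (marg p (fun ω => (U ω, Z ω)) (u, z) * marg p (fun ω => (Q ω, Z ω)) (q, z)
                / marg p Z z - marg p (fun ω => (U ω, Q ω, Z ω)) (u, q, z)))
              = ∑ q, ∑ u, ∑ z,
              (marg p (fun ω => (U ω, Z ω)) (u, z) * marg p (fun ω => (Q ω, Z ω)) (q, z)
                / marg p Z z - marg p (fun ω => (U ω, Q ω, Z ω)) (u, q, z)) := Finset.sum_comm
            _ = ∑ q, ∑ z, ∑ u,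
              (marg p (fun ω => (U ω, Z ω)) (u, z) * marg p (fun ω => (Q ω, Z ω)) (q, z)
                / marg p Z z - marg p (fun ω => (U ω, Q ω, Z ω)) (u, q, z)) :=
              Finset.sum_congr rfl fun q _ => Finset.sum_comm
            _ = ∑ z, ∑ q, ∑ u,
              (marg p (fun ω => (U ω, Z ω)) (u, z) * marg p (fun ω => (Q ω, Z ω)) (q, z)
                / marg p Z z - marg p (fun ω => (U ω, Q ω, Z ω)) (u, q, z)) := Finset.sum_comm
      _ = 0 := by
          refine Finset.sum_eq_zero fun z _ => ?_
          by_cases hz : marg p Z z = 0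
          · have hUZ : ∀ u, marg p (fun ω => (U ω, Z ω)) (u, z) = 0 := fun u =>
              le_antisymm (hz ▸ marg_pair_le p hp U Z u z) (marg_nonneg p hp _ _)
            have hUQZ : ∀ u q, marg p (fun ω => (U ω, Q ω, Z ω)) (u, q, z) = 0 := fun u q =>
              le_antisymm ((marg_mid_le p hp U Q Z u q z).trans (hUZ u).le)
                (marg_nonneg p hp _ _)
            refine Finset.sum_eq_zero fun q _ => Finset.sum_eq_zero fun u _ => ?_
            rw [hUZ u, hUQZ u q]
            simp
          · have e1 : ∀ q, ∑ u, marg p (fun ω => (U ω, Z ω)) (u, z)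
                * marg p (fun ω => (Q ω, Z ω)) (q, z) / marg p Z z
                = marg p (fun ω => (Q ω, Z ω)) (q, z) := by
              intro q
              rw [← Finset.sum_div, ← Finset.sum_mul, marg_sum_fst p U Z z, mul_comm,
                mul_div_assoc, div_self hz, mul_one]
            have e2 : ∀ q, ∑ u, marg p (fun ω => (U ω, Q ω, Z ω)) (u, q, z)
                = marg p (fun ω => (Q ω, Z ω)) (q, z) := fun q =>
              marg_sum_fst p U (fun ω => (Q ω, Z ω)) (q, z)
            simp only [Finset.sum_sub_distrib]
            rw [show (∑ q, ∑ u, marg p (fun ω => (U ω, Z ω)) (u, z)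
                * marg p (fun ω => (Q ω, Z ω)) (q, z) / marg p Z z)
                = ∑ q, marg p (fun ω => (Q ω, Z ω)) (q, z) from
                Finset.sum_congr rfl fun q _ => e1 q]
            rw [show (∑ q, ∑ u, marg p (fun ω => (U ω, Q ω, Z ω)) (u, q, z))
                = ∑ q, marg p (fun ω => (Q ω, Z ω)) (q, z) from
                Finset.sum_congr rfl fun q _ => e2 q]
            rw [sub_self]
  linarith

end IT

section TimeSharing
variable {Qt At Et Dt Xt Yt : Type}
  [Fintype Qt] [DecidableEq Qt] [Fintype At] [DecidableEq At]
  [Fintype Et] [DecidableEq Et] [Fintype Dt] [DecidableEq Dt]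
  [Fintype Xt] [DecidableEq Xt] [Fintype Yt] [DecidableEq Yt]

/-- `I(X; Y,S_d | A,Q) − I(X; S_e | A,Q) ≤ I(X; Y,S_d | A) − I(X; S_e | A)`. -/
theorem stmt17
    (p : Qt × At × Et × Dt × Xt × Yt → ℝ)
    (PQ : Qt → ℝ) (PA : At → Qt → ℝ) (PS : Et × Dt → At → ℝ)
    (PX : Xt → At → Et → Qt → ℝ) (PY : Yt → Xt → Et → Dt → ℝ)
    (hPQ0 : ∀ q, 0 ≤ PQ q) (hPQ1 : ∑ q, PQ q = 1)
    (hPA0 : ∀ a q, 0 ≤ PA a q) (hPA1 : ∀ q, ∑ a, PA a q = 1)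
    (hPS0 : ∀ s a, 0 ≤ PS s a) (hPS1 : ∀ a, ∑ s, PS s a = 1)
    (hPX0 : ∀ x a e q, 0 ≤ PX x a e q) (hPX1 : ∀ a e q, ∑ x, PX x a e q = 1)
    (hPY0 : ∀ y x e d, 0 ≤ PY y x e d) (hPY1 : ∀ x e d, ∑ y, PY y x e d = 1)
    (hfac : ∀ q a e d x y,
      p (q, a, e, d, x, y) = PQ q * PA a q * PS (e, d) a * PX x a e q * PY y x e d) :
    IT.condMI p (fun ω => ω.2.2.2.2.1) (fun ω => (ω.2.2.2.2.2, ω.2.2.2.1))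
        (fun ω => (ω.2.1, ω.1))
      - IT.condMI p (fun ω => ω.2.2.2.2.1) (fun ω => ω.2.2.1) (fun ω => (ω.2.1, ω.1))
    ≤ IT.condMI p (fun ω => ω.2.2.2.2.1) (fun ω => (ω.2.2.2.2.2, ω.2.2.2.1))
        (fun ω => ω.2.1)
      - IT.condMI p (fun ω => ω.2.2.2.2.1) (fun ω => ω.2.2.1) (fun ω => ω.2.1) := by
  -- weights are nonnegative
  have hp : ∀ ω, 0 ≤ p ω := by
    rintro ⟨q, a, e, d, x, y⟩
    rw [hfac]
    exact mul_nonneg (mul_nonneg (mul_nonneg (mul_nonneg (hPQ0 q) (hPA0 a q))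
      (hPS0 (e, d) a)) (hPX0 x a e q)) (hPY0 y x e d)
  have hPS1' : ∀ a, ∑ i : Et, ∑ j : Dt, PS (i, j) a = 1 := fun a => by
    rw [show (∑ i : Et, ∑ j : Dt, PS (i, j) a) = ∑ s : Et × Dt, PS s a from
      (Fintype.sum_prod_type (f := fun s : Et × Dt => PS s a)).symm, hPS1 a]
  -- marginal computations
  have mQA : ∀ q a, IT.marg p (fun ω => (ω.1, ω.2.1)) (q, a) = PQ q * PA a q := by
    intro q a
    unfold IT.marg
    simp only [Fintype.sum_prod_type, hfac, Prod.mk.injEq, ite_and, Finset.sum_ite_irrel,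
      Finset.sum_ite_eq, Finset.sum_ite_eq', Finset.mem_univ, if_true,
      Finset.sum_const_zero, ite_self]
    simp [hPX1, hPY1, hPS1', ← Finset.mul_sum]
  have mA : ∀ a, IT.marg p (fun ω => ω.2.1) a = ∑ q, PQ q * PA a q := by
    intro a
    unfold IT.marg
    simp only [Fintype.sum_prod_type, hfac, Prod.mk.injEq, ite_and, Finset.sum_ite_irrel,
      Finset.sum_ite_eq, Finset.sum_ite_eq', Finset.mem_univ, if_true,
      Finset.sum_const_zero, ite_self]
    simp [hPX1, hPY1, hPS1', ← Finset.mul_sum]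
  have mSeA : ∀ e a, IT.marg p (fun ω => (ω.2.2.1, ω.2.1)) (e, a)
      = (∑ q, PQ q * PA a q) * (∑ d, PS (e, d) a) := by
    intro e a
    unfold IT.marg
    simp only [Fintype.sum_prod_type, hfac, Prod.mk.injEq, ite_and, Finset.sum_ite_irrel,
      Finset.sum_ite_eq, Finset.sum_ite_eq', Finset.mem_univ, if_true,
      Finset.sum_const_zero, ite_self]
    simp [hPX1, hPY1, hPS1', ← Finset.mul_sum]
    rw [← Finset.sum_mul]
  have mSeQA : ∀ e q a, IT.marg p (fun ω => (ω.2.2.1, ω.1, ω.2.1)) (e, q, a)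
      = PQ q * PA a q * (∑ d, PS (e, d) a) := by
    intro e q a
    unfold IT.marg
    simp only [Fintype.sum_prod_type, hfac, Prod.mk.injEq, ite_and, Finset.sum_ite_irrel,
      Finset.sum_ite_eq, Finset.sum_ite_eq', Finset.mem_univ, if_true,
      Finset.sum_const_zero, ite_self]
    simp [hPX1, hPY1, hPS1', ← Finset.mul_sum]
  have mZ : ∀ x e a, IT.marg p (fun ω => (ω.2.2.2.2.1, ω.2.2.1, ω.2.1)) (x, e, a)
      = (∑ q, PQ q * PA a q * PX x a e q) * (∑ d, PS (e, d) a) := by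
    intro x e a
    unfold IT.marg
    simp only [Fintype.sum_prod_type, hfac, Prod.mk.injEq, ite_and, Finset.sum_ite_irrel,
      Finset.sum_ite_eq, Finset.sum_ite_eq', Finset.mem_univ, if_true,
      Finset.sum_const_zero, ite_self]
    simp [hPX1, hPY1, ← Finset.mul_sum]
    rw [Finset.sum_mul]
    refine Finset.sum_congr rfl fun q _ => ?_
    rw [Finset.mul_sum]
    exact Finset.sum_congr rfl fun d _ => by ring
  have mQZ : ∀ q x e a, IT.marg p (fun ω => (ω.1, ω.2.2.2.2.1, ω.2.2.1, ω.2.1)) (q, x, e, a)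
      = PQ q * PA a q * PX x a e q * (∑ d, PS (e, d) a) := by
    intro q x e a
    unfold IT.marg
    simp only [Fintype.sum_prod_type, hfac, Prod.mk.injEq, ite_and, Finset.sum_ite_irrel,
      Finset.sum_ite_eq, Finset.sum_ite_eq', Finset.mem_univ, if_true,
      Finset.sum_const_zero, ite_self]
    simp [hPX1, hPY1, ← Finset.mul_sum]
    rw [Finset.mul_sum]
    exact Finset.sum_congr rfl fun d _ => by ring
  have mWZ : ∀ y d x e a, IT.marg p
      (fun ω => ((ω.2.2.2.2.2, ω.2.2.2.1), ω.2.2.2.2.1, ω.2.2.1, ω.2.1)) ((y, d), x, e, a)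
      = PS (e, d) a * PY y x e d * (∑ q, PQ q * PA a q * PX x a e q) := by
    intro y d x e a
    unfold IT.marg
    simp only [Fintype.sum_prod_type, hfac, Prod.mk.injEq, ite_and, Finset.sum_ite_irrel,
      Finset.sum_ite_eq, Finset.sum_ite_eq', Finset.mem_univ, if_true,
      Finset.sum_const_zero, ite_self]
    rw [Finset.mul_sum]
    exact Finset.sum_congr rfl fun q _ => by ring
  have mWQZ : ∀ y d q x e a, IT.marg p
      (fun ω => ((ω.2.2.2.2.2, ω.2.2.2.1), ω.1, ω.2.2.2.2.1, ω.2.2.1, ω.2.1))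
      ((y, d), q, x, e, a)
      = PQ q * PA a q * PS (e, d) a * PX x a e q * PY y x e d := by
    intro y d q x e a
    unfold IT.marg
    simp only [Fintype.sum_prod_type, hfac, Prod.mk.injEq, ite_and, Finset.sum_ite_irrel,
      Finset.sum_ite_eq, Finset.sum_ite_eq', Finset.mem_univ, if_true,
      Finset.sum_const_zero, ite_self]
  -- conditional independence facts
  have hCI1 : IT.CondIndep p (fun ω => ω.2.2.1) (fun ω => ω.1) (fun ω => ω.2.1) := by
    intro e q a
    simp only [mSeA, mQA, mSeQA, mA]
    ring
  have hCI2 : IT.CondIndep p (fun ω => (ω.2.2.2.2.2, ω.2.2.2.1)) (fun ω => ω.1)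
      (fun ω => (ω.2.2.2.2.1, ω.2.2.1, ω.2.1)) := by
    rintro ⟨y, d⟩ q ⟨x, e, a⟩
    simp only [mWZ, mQZ, mWQZ, mZ]
    ring
  -- regrouping equalities for entropies
  have c1 : IT.ent p (fun ω => ((ω.2.2.2.2.2, ω.2.2.2.1), ω.1, ω.2.1))
      = IT.ent p (fun ω => ((ω.2.2.2.2.2, ω.2.2.2.1), ω.2.1, ω.1)) :=
    IT.ent_congr p _ _ ⟨fun v => (v.1, v.2.2, v.2.1), fun v => (v.1, v.2.2, v.2.1),
      fun v => rfl, fun v => rfl⟩ (fun ω => rfl)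
  have c2 : IT.ent p (fun ω => (ω.1, ω.2.1)) = IT.ent p (fun ω => (ω.2.1, ω.1)) :=
    IT.ent_congr p _ _ ⟨fun v => (v.2, v.1), fun v => (v.2, v.1),
      fun v => rfl, fun v => rfl⟩ (fun ω => rfl)
  have c3 : IT.ent p (fun ω => (ω.2.2.1, ω.1, ω.2.1))
      = IT.ent p (fun ω => (ω.2.2.1, ω.2.1, ω.1)) :=
    IT.ent_congr p _ _ ⟨fun v => (v.1, v.2.2, v.2.1), fun v => (v.1, v.2.2, v.2.1),
      fun v => rfl, fun v => rfl⟩ (fun ω => rfl)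
  have c4 : IT.ent p (fun ω => ((ω.2.2.2.2.2, ω.2.2.2.1), ω.1, ω.2.2.2.2.1, ω.2.2.1, ω.2.1))
      = IT.ent p (fun ω => ω) :=
    IT.ent_congr p _ _
      ⟨fun ω => ((ω.2.2.2.2.2, ω.2.2.2.1), ω.1, ω.2.2.2.2.1, ω.2.2.1, ω.2.1),
       fun v => (v.2.1, v.2.2.2.2, v.2.2.2.1, v.1.2, v.2.2.1, v.1.1),
       fun v => rfl, fun v => rfl⟩ (fun ω => rfl)
  have c5 : IT.ent p (fun ω => (ω.2.2.2.2.1, ω.2.2.1, ω.2.1))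
      = IT.ent p (fun ω => ((ω.2.2.2.2.1, ω.2.2.1), ω.2.1)) :=
    IT.ent_congr p _ _ ⟨fun v => (v.1.1, v.1.2, v.2), fun v => ((v.1, v.2.1), v.2.2),
      fun v => rfl, fun v => rfl⟩ (fun ω => rfl)
  have c6 : IT.ent p (fun ω => ((ω.2.2.2.2.2, ω.2.2.2.1), ω.2.2.2.2.1, ω.2.2.1, ω.2.1))
      = IT.ent p (fun ω => ω.2) :=
    IT.ent_congr p _ _
      ⟨fun u => ((u.2.2.2.2, u.2.2.1), u.2.2.2.1, u.2.1, u.1),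
       fun v => (v.2.2.2, v.2.2.1, v.1.2, v.2.1, v.1.1),
       fun v => rfl, fun v => rfl⟩ (fun ω => rfl)
  have c7 : IT.ent p (fun ω => (ω.1, ω.2.2.2.2.1, ω.2.2.1, ω.2.1))
      = IT.ent p (fun ω => ((ω.2.2.2.2.1, ω.2.2.1), ω.2.1, ω.1)) :=
    IT.ent_congr p _ _
      ⟨fun v => (v.2.2, v.1.1, v.1.2, v.2.1), fun v => ((v.2.1, v.2.2.1), v.2.2.2, v.1),
       fun v => rfl, fun v => rfl⟩ (fun ω => rfl)
  have c8 : IT.ent p (fun ω => (ω.2.2.1, ω.1,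
        (ω.2.2.2.2.1, ω.2.2.2.2.2, ω.2.2.2.1), ω.2.1))
      = IT.ent p (fun ω => ω) :=
    IT.ent_congr p _ _
      ⟨fun ω => (ω.2.2.1, ω.1, (ω.2.2.2.2.1, ω.2.2.2.2.2, ω.2.2.2.1), ω.2.1),
       fun v => (v.2.1, v.2.2.2, v.1, v.2.2.1.2.2, v.2.2.1.1, v.2.2.1.2.1),
       fun v => rfl, fun v => rfl⟩ (fun ω => rfl)
  have c9 : IT.ent p (fun ω => (ω.2.2.1,
        (ω.2.2.2.2.1, ω.2.2.2.2.2, ω.2.2.2.1), ω.2.1))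
      = IT.ent p (fun ω => ω.2) :=
    IT.ent_congr p _ _
      ⟨fun u => (u.2.1, (u.2.2.2.1, u.2.2.2.2, u.2.2.1), u.1),
       fun v => (v.2.2, v.1, v.2.1.2.2, v.2.1.1, v.2.1.2.1),
       fun v => rfl, fun v => rfl⟩ (fun ω => rfl)
  have c10 : IT.ent p (fun ω => (ω.1,
        (ω.2.2.2.2.1, ω.2.2.2.2.2, ω.2.2.2.1), ω.2.1))
      = IT.ent p (fun ω => ((ω.2.2.2.2.1, ω.2.2.2.2.2, ω.2.2.2.1), ω.2.1, ω.1)) :=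
    IT.ent_congr p _ _
      ⟨fun v => (v.2.2, v.1, v.2.1), fun v => (v.2.1, v.2.2, v.1),
       fun v => rfl, fun v => rfl⟩ (fun ω => rfl)
  -- four key entropy facts
  have F1 := IT.core_le p hp (fun ω => (ω.2.2.2.2.2, ω.2.2.2.1)) (fun ω => ω.1)
    (fun ω => ω.2.1)
  have F2 := IT.core_eq p hp (fun ω => ω.2.2.1) (fun ω => ω.1) (fun ω => ω.2.1) hCI1
  have F3 := IT.core_eq p hp (fun ω => (ω.2.2.2.2.2, ω.2.2.2.1)) (fun ω => ω.1)
    (fun ω => (ω.2.2.2.2.1, ω.2.2.1, ω.2.1)) hCI2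
  have F4 := IT.core_le p hp (fun ω => ω.2.2.1) (fun ω => ω.1)
    (fun ω => ((ω.2.2.2.2.1, ω.2.2.2.2.2, ω.2.2.2.1), ω.2.1))
  simp only [c1, c2] at F1
  simp only [c3, c2] at F2
  simp only [c4, c5, c6, c7] at F3
  simp only [c8, c9, c10] at F4
  simp only [IT.condMI, IT.condEnt]
  linarith [F1, F2, F3, F4]

end TimeSharing
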